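/- Let A, Z ∈ {0,1} and W be random variables on a finite probability space with 0 < P(Z=1|W) < 1 a.s. and δ(W) := E[A|W,Z=1] − E[A|W,Z=0] ≠ 0 a.s. Let m*(W,Z) be any function (a possibly misspecified model for E[A|W,Z]) and δ*(W) any function with δ*(W) ≠ 0 a.s., and set ε* = A − δ*(W)Z − m*(W, 0) where m*(W,0) is an arbitrary function of W. Then E[ (−1)^{1−Z} ε* / ( P(Z|W) δ*(W) ) | W ] = (δ(W) − δ*(W)) / δ*(W) almost surely. In particular, this conditional expectation is zero if and only if δ*(W) = δ(W) a.s. -/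

import Mathlib

open Finset
open scoped Classical BigOperators

noncomputable section

variable {Ω : Type}

/-- Expectation of `f` under pmf `p` on a finite sample space. -/
def E [Fintype Ω] (p f : Ω → ℝ) : ℝ := ∑ ω, p ω * f ω

/-- Probability of the event `s` under pmf `p`. -/
def Pr [Fintype Ω] (p : Ω → ℝ) (s : Ω → Prop) : ℝ := ∑ ω, if s ω then p ω else 0

/-- Conditional expectation of `f` given the event `s`. -/
def CE [Fintype Ω] (p f : Ω → ℝ) (s : Ω → Prop) : ℝ :=
  (∑ ω, if s ω then p ω * f ω else 0) / Pr p s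

/-- The realized instrument propensity P(Z = Z(ω) | W = W(ω)). -/
def PZ {β : Type} [Fintype Ω] (p : Ω → ℝ) (W : Ω → β) (Z : Ω → ℝ) (ω : Ω) : ℝ :=
  Pr p (fun ω' => W ω' = W ω ∧ Z ω' = Z ω) / Pr p (fun ω' => W ω' = W ω)

/-- The sign (−1)^{1−X(ω)} for a {0,1}-valued variable X. -/
def sgn (X : Ω → ℝ) (ω : Ω) : ℝ := if X ω = 1 then 1 else -1

/-- With the true instrument propensity but a possibly misspecified treatment model,
the signed weighted residual has conditional mean (δ − δ*)/δ*, vanishing iff δ* = δ. -/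
theorem stmt6 {β : Type} [Fintype Ω]
    (p : Ω → ℝ) (hp0 : ∀ ω, 0 ≤ p ω) (hp1 : ∑ ω, p ω = 1)
    (A Z : Ω → ℝ) (W : Ω → β)
    (hA : ∀ ω, A ω = 0 ∨ A ω = 1) (hZ : ∀ ω, Z ω = 0 ∨ Z ω = 1)
    (hposW : ∀ ω, 0 < p ω → 0 < Pr p (fun ω' => W ω' = W ω))
    (hposWZ : ∀ ω, 0 < p ω → ∀ z : ℝ, z = 0 ∨ z = 1 →
      0 < Pr p (fun ω' => W ω' = W ω ∧ Z ω' = z))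
    (δ : β → ℝ)
    (hδdef : ∀ ω, 0 < p ω →
      δ (W ω) = CE p A (fun ω' => W ω' = W ω ∧ Z ω' = 1)
        - CE p A (fun ω' => W ω' = W ω ∧ Z ω' = 0))
    (hδne : ∀ ω, 0 < p ω → δ (W ω) ≠ 0)
    -- possibly misspecified working models
    (δs : β → ℝ) (hδsne : ∀ ω, 0 < p ω → δs (W ω) ≠ 0)
    (ms : β → ℝ) :
    ∀ ω, 0 < p ω →
      (CE p (fun ω' => sgn Z ω'
            * (A ω' - δs (W ω') * Z ω' - ms (W ω'))
            / (PZ p W Z ω' * δs (W ω')))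
          (fun ω' => W ω' = W ω)
        = (δ (W ω) - δs (W ω)) / δs (W ω))
      ∧ (CE p (fun ω' => sgn Z ω'
            * (A ω' - δs (W ω') * Z ω' - ms (W ω'))
            / (PZ p W Z ω' * δs (W ω')))
          (fun ω' => W ω' = W ω) = 0 ↔ δs (W ω) = δ (W ω)) := by

  intro ω hω
  have hδs : δs (W ω) ≠ 0 := hδsne ω hω
  have hPW : 0 < Pr p (fun ω' => W ω' = W ω) := hposW ω hω
  have hP1 : 0 < Pr p (fun ω' => W ω' = W ω ∧ Z ω' = 1) := hposWZ ω hω 1 (Or.inr rfl)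
  have hP0 : 0 < Pr p (fun ω' => W ω' = W ω ∧ Z ω' = 0) := hposWZ ω hω 0 (Or.inl rfl)
  set PW := Pr p (fun ω' => W ω' = W ω) with hPWdef
  set P1 := Pr p (fun ω' => W ω' = W ω ∧ Z ω' = 1) with hP1def
  set P0 := Pr p (fun ω' => W ω' = W ω ∧ Z ω' = 0) with hP0def
  set C1 := CE p A (fun ω' => W ω' = W ω ∧ Z ω' = 1) with hC1def
  set C0 := CE p A (fun ω' => W ω' = W ω ∧ Z ω' = 0) with hC0def
  have key : (∑ ω', if W ω' = W ω then p ω' * (sgn Z ω'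
            * (A ω' - δs (W ω') * Z ω' - ms (W ω'))
            / (PZ p W Z ω' * δs (W ω'))) else 0)
      = (∑ ω', if W ω' = W ω ∧ Z ω' = 1 then p ω' * (A ω' - (δs (W ω) + ms (W ω))) else 0)
          * (PW / (P1 * δs (W ω)))
        - (∑ ω', if W ω' = W ω ∧ Z ω' = 0 then p ω' * (A ω' - ms (W ω)) else 0)
          * (PW / (P0 * δs (W ω))) := by
    rw [Finset.sum_mul, Finset.sum_mul, ← Finset.sum_sub_distrib]
    apply Finset.sum_congr rfl
    intro ω' _
    by_cases hW : W ω' = W ω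
    · rcases hZ ω' with hz | hz
      · have h1 : Z ω' ≠ 1 := by rw [hz]; norm_num
        have hPZ : PZ p W Z ω' = P0 / PW := by
          simp only [PZ, hW, hz, hP0def, hP1def, hPWdef]
        simp only [sgn, hPZ, hW, hz, h1, if_true, if_false, and_true, and_false, (by norm_num : (0:ℝ) ≠ 1)]
        field_simp
        ring
      · have hPZ : PZ p W Z ω' = P1 / PW := by
          simp only [PZ, hW, hz, hP0def, hP1def, hPWdef]
        simp only [sgn, hPZ, hW, hz, if_true, and_true, and_false, if_false]
        have h1 : ¬ ((1:ℝ) = 0) := by norm_num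
        simp only [h1, if_false, and_false]
        field_simp
        ring
    · simp only [hW, if_false, false_and, zero_mul, sub_zero]
  have e1 : (∑ ω', if W ω' = W ω ∧ Z ω' = 1 then p ω' * (A ω' - (δs (W ω) + ms (W ω))) else 0)
      = C1 * P1 - (δs (W ω) + ms (W ω)) * P1 := by
    have h : ∀ ω', (if W ω' = W ω ∧ Z ω' = 1 then p ω' * (A ω' - (δs (W ω) + ms (W ω))) else 0)
        = (if W ω' = W ω ∧ Z ω' = 1 then p ω' * A ω' else 0)
          - (δs (W ω) + ms (W ω)) * (if W ω' = W ω ∧ Z ω' = 1 then p ω' else 0) := by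
      intro ω'; split <;> ring
    rw [Finset.sum_congr rfl (fun ω' _ => h ω'), Finset.sum_sub_distrib, ← Finset.mul_sum]
    have hs : C1 * P1 = ∑ ω', if W ω' = W ω ∧ Z ω' = 1 then p ω' * A ω' else 0 := by
      rw [hC1def, CE, ← hP1def, div_mul_cancel₀ _ (ne_of_gt hP1)]
      congr
      funext x
      by_cases hx : W x = W ω ∧ Z x = 1 <;> simp [hx]
    rw [← hs]
    simp only [hP1def, Pr]
    congr
    funext x
    by_cases hx : W x = W ω ∧ Z x = 1 <;> simp [hx]
  have e0 : (∑ ω', if W ω' = W ω ∧ Z ω' = 0 then p ω' * (A ω' - ms (W ω)) else 0)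
      = C0 * P0 - ms (W ω) * P0 := by
    have h : ∀ ω', (if W ω' = W ω ∧ Z ω' = 0 then p ω' * (A ω' - ms (W ω)) else 0)
        = (if W ω' = W ω ∧ Z ω' = 0 then p ω' * A ω' else 0)
          - ms (W ω) * (if W ω' = W ω ∧ Z ω' = 0 then p ω' else 0) := by
      intro ω'; split <;> ring
    rw [Finset.sum_congr rfl (fun ω' _ => h ω'), Finset.sum_sub_distrib, ← Finset.mul_sum]
    have hs : C0 * P0 = ∑ ω', if W ω' = W ω ∧ Z ω' = 0 then p ω' * A ω' else 0 := by
      rw [hC0def, CE, ← hP0def, div_mul_cancel₀ _ (ne_of_gt hP0)]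
      congr
      funext x
      by_cases hx : W x = W ω ∧ Z x = 0 <;> simp [hx]
    rw [← hs]
    simp only [hP0def, Pr]
    congr
    funext x
    by_cases hx : W x = W ω ∧ Z x = 0 <;> simp [hx]
  have hδ : δ (W ω) = C1 - C0 := hδdef ω hω
  have main : CE p (fun ω' => sgn Z ω'
            * (A ω' - δs (W ω') * Z ω' - ms (W ω'))
            / (PZ p W Z ω' * δs (W ω')))
          (fun ω' => W ω' = W ω)
        = (δ (W ω) - δs (W ω)) / δs (W ω) := by
    rw [CE, key, e1, e0, hδ, ← hPWdef]
    field_simp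
    ring
  refine ⟨main, ?_⟩
  rw [main, div_eq_zero_iff, sub_eq_zero, hδ]
  constructor
  · rintro (h | h)
    · exact h.symm
    · exact absurd h hδs
  · intro h; exact Or.inl h.symm
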